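/- (Corollary) Let f: [0,1]^d → ℝ be continuous, coordinatewise non-decreasing, and Lipschitz continuous (bounded partial derivatives). Then for every ε > 0 there exist K ≥ 1, group sizes h₁,…,h_K ≥ 1, a parameter β > 0, nonnegative weight vectors w^(k,j) ∈ ℝ^d and biases b^(k,j) ∈ ℝ such that the SMM network output y_SMM satisfies |f(x) − y_SMM(x)| < ε for all x ∈ [0,1]^d. -/

import Mathlib

/-- The scaled LogSumExp function: `LSE_β(x₁,…,xₙ) = (1/β)·log(∑ i, exp(β·xᵢ))`. -/
noncomputable def lse (β : ℝ) {n : ℕ} (x : Fin n → ℝ) : ℝ :=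
  (1 / β) * Real.log (∑ i, Real.exp (β * x i))

/-- Output of a smooth min-max (SMM) network:
`y_SMM(x) = LSE_{−β}(g^(1)(x),…,g^(K)(x))` with
`g^(k)(x) = LSE_β(a^(k,1)(x),…,a^(k,h_k)(x))` and `a^(k,j)(x) = w^(k,j)·x − b^(k,j)`. -/
noncomputable def smmOut {d K : ℕ} {h : Fin K → ℕ} (β : ℝ)
    (w : (k : Fin K) → Fin (h k) → Fin d → ℝ)
    (b : (k : Fin K) → Fin (h k) → ℝ) (x : Fin d → ℝ) : ℝ :=
  lse (-β) fun k => lse β fun j => (∑ i, w k j i * x i) - b k j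

lemma le_lse {β : ℝ} (hβ : 0 < β) {n : ℕ} (x : Fin n → ℝ) (j : Fin n) :
    x j ≤ lse β x := by
  have h1 : Real.exp (β * x j) ≤ ∑ i, Real.exp (β * x i) :=
    Finset.single_le_sum (f := fun i => Real.exp (β * x i))
      (fun i _ => (Real.exp_pos _).le) (Finset.mem_univ j)
  have h2 : β * x j ≤ Real.log (∑ i, Real.exp (β * x i)) := by
    rw [← Real.log_exp (β * x j)]
    exact Real.log_le_log (Real.exp_pos _) h1
  have h3 : (1/β) * (β * x j) ≤ (1/β) * Real.log (∑ i, Real.exp (β * x i)) :=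
    mul_le_mul_of_nonneg_left h2 (by positivity)
  calc x j = (1/β) * (β * x j) := by field_simp
    _ ≤ lse β x := h3

lemma lse_le {β : ℝ} (hβ : 0 < β) {n : ℕ} (hn : 0 < n) (x : Fin n → ℝ) (M : ℝ)
    (hM : ∀ i, x i ≤ M) : lse β x ≤ M + Real.log n / β := by
  have h1 : ∑ i, Real.exp (β * x i) ≤ (n : ℝ) * Real.exp (β * M) := by
    calc ∑ i, Real.exp (β * x i) ≤ ∑ _i : Fin n, Real.exp (β * M) :=
          Finset.sum_le_sum fun i _ => Real.exp_le_exp.mpr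
            (mul_le_mul_of_nonneg_left (hM i) hβ.le)
      _ = (n : ℝ) * Real.exp (β * M) := by simp [mul_comm]
  have hpos : (0:ℝ) < ∑ i, Real.exp (β * x i) := by
    have : (0:ℕ) < n := hn
    exact Finset.sum_pos (fun i _ => Real.exp_pos _) (by simpa using Finset.univ_nonempty_iff.mpr ⟨⟨0, hn⟩⟩)
  have h2 : Real.log (∑ i, Real.exp (β * x i)) ≤ Real.log n + β * M := by
    calc Real.log (∑ i, Real.exp (β * x i)) ≤ Real.log ((n : ℝ) * Real.exp (β * M)) :=
          Real.log_le_log hpos h1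
      _ = Real.log n + β * M := by
          rw [Real.log_mul (by positivity) (Real.exp_pos _).ne', Real.log_exp]
  have h3 : (1/β) * Real.log (∑ i, Real.exp (β * x i)) ≤ (1/β) * (Real.log n + β * M) :=
    mul_le_mul_of_nonneg_left h2 (by positivity)
  calc lse β x ≤ (1/β) * (Real.log n + β * M) := h3
    _ = M + Real.log n / β := by field_simp; ring

lemma lse_neg_eq (β : ℝ) {n : ℕ} (x : Fin n → ℝ) :
    lse (-β) x = - lse β (fun i => - x i) := by
  unfold lse
  have h : ∀ i, (-β) * x i = β * (- x i) := fun i => by ring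
  simp only [h]
  have hβ : (1:ℝ)/(-β) = -(1/β) := by
    rcases eq_or_ne β 0 with h0 | h0
    · simp [h0]
    · field_simp
  rw [hβ]; ring

lemma lse_neg_le {β : ℝ} (hβ : 0 < β) {n : ℕ} (y : Fin n → ℝ) (j : Fin n) :
    lse (-β) y ≤ y j := by
  rw [lse_neg_eq]
  have := le_lse hβ (fun i => -y i) j
  linarith

lemma le_lse_neg {β : ℝ} (hβ : 0 < β) {n : ℕ} (hn : 0 < n) (y : Fin n → ℝ) (m : ℝ)
    (hm : ∀ i, m ≤ y i) : m - Real.log n / β ≤ lse (-β) y := by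
  rw [lse_neg_eq]
  have := lse_le hβ hn (fun i => -y i) (-m) (fun i => by show -y i ≤ -m; linarith [hm i])
  linarith

/-- (Corollary) Every continuous, coordinatewise non-decreasing, Lipschitz function
`f : [0,1]^d → ℝ` can be approximated uniformly to within any `ε > 0` by a
smooth min-max network with nonnegative weights and some parameter `β > 0`. -/
theorem smm_universal_approximation {d : ℕ} (f : (Fin d → ℝ) → ℝ)
    (hcont : ContinuousOn f (Set.Icc 0 1))
    (hmono : MonotoneOn f (Set.Icc 0 1))
    (hlip : ∃ C : NNReal, LipschitzOnWith C f (Set.Icc 0 1))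
    (ε : ℝ) (hε : 0 < ε) :
    ∃ (K : ℕ) (_ : 0 < K) (h : Fin K → ℕ) (_ : ∀ k, 0 < h k) (β : ℝ) (_ : 0 < β)
      (w : (k : Fin K) → Fin (h k) → Fin d → ℝ)
      (b : (k : Fin K) → Fin (h k) → ℝ),
      (∀ k j i, 0 ≤ w k j i) ∧
      ∀ x ∈ Set.Icc (0 : Fin d → ℝ) 1, |f x - smmOut β w b x| < ε := by
  classical
  obtain ⟨C, hC⟩ := hlip
  -- choose grid resolution N
  obtain ⟨N₀, hN₀⟩ := exists_nat_gt ((C:ℝ) * 2 / ε)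
  set N : ℕ := N₀ + 1 with hNdef
  have hNR : (0:ℝ) < N := by positivity
  have hCN : (C:ℝ) / N < ε / 2 := by
    have h2 : (C:ℝ) * 2 / ε < N := lt_of_lt_of_le hN₀ (by exact_mod_cast Nat.le_succ N₀)
    rw [div_lt_iff₀ hε] at h2
    rw [div_lt_iff₀ hNR]
    nlinarith
  set K : ℕ := (N + 1) ^ d with hKdef
  have hKpos : 0 < K := Nat.pow_pos (Nat.succ_pos N)
  set e : (Fin d → Fin (N+1)) ≃ Fin K := finFunctionFinEquiv with he
  set p : Fin K → Fin d → ℝ := fun k i => (e.symm k i : ℝ) / N with hp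
  have hpIcc : ∀ k, p k ∈ Set.Icc (0 : Fin d → ℝ) 1 := by
    intro k
    constructor
    · intro i; simp only [hp, Pi.zero_apply]; positivity
    · intro i
      simp only [hp, Pi.one_apply]
      rw [div_le_one hNR]
      exact_mod_cast Nat.cast_le.mpr (Fin.is_le (e.symm k i))
  -- choose β
  set L : ℝ := Real.log K + Real.log (d+1) with hL
  have hlogK0 : 0 ≤ Real.log K := Real.log_nonneg (by exact_mod_cast hKpos)
  have hlogd0 : 0 ≤ Real.log ((d:ℝ)+1) := Real.log_nonneg (by push_cast; linarith [Nat.cast_nonneg (α := ℝ) d])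
  have hL0 : 0 ≤ L := by positivity
  set β : ℝ := 2 * (L + 1) / ε with hβdef
  have hβ : 0 < β := by positivity
  have heqβ : ε / 2 * β = L + 1 := by
    rw [hβdef]
    rw [div_mul_div_comm, mul_comm ε (2 * (L + 1)), mul_div_mul_right _ _ hε.ne']
    norm_num
  have hlogK : Real.log K / β < ε / 2 := by
    rw [div_lt_iff₀ hβ, heqβ]; linarith
  have hlogd : Real.log ((d:ℕ)+1 : ℕ) / β < ε / 2 := by
    rw [div_lt_iff₀ hβ, heqβ]; push_cast; push_cast at hlogd0; linarith
  -- weights and biases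
  set w : (k : Fin K) → Fin (d+1) → Fin d → ℝ :=
    fun _k j i => if (j:ℕ) = (i:ℕ) then (C:ℝ) else 0 with hw
  set b : (k : Fin K) → Fin (d+1) → ℝ :=
    fun k j => if h : (j:ℕ) < d then (C:ℝ) * p k ⟨j, h⟩ - f (p k) else - f (p k) with hb
  refine ⟨K, hKpos, fun _ => d + 1, fun _ => Nat.succ_pos d, β, hβ, w, b, ?_, ?_⟩
  · intro k j i
    simp only [hw]
    split
    · exact C.coe_nonneg
    · exact le_refl 0
  intro x hx
  -- affine activations
  have hA : ∀ (k : Fin K) (j : Fin (d+1)),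
      (∑ i, w k j i * x i) - b k j =
      if h : (j:ℕ) < d then f (p k) + (C:ℝ) * (x ⟨j,h⟩ - p k ⟨j,h⟩) else f (p k) := by
    intro k j
    by_cases h : (j:ℕ) < d
    · rw [dif_pos h]
      have hsum : (∑ i, w k j i * x i) = (C:ℝ) * x ⟨(j:ℕ),h⟩ := by
        rw [Finset.sum_eq_single (⟨(j:ℕ), h⟩ : Fin d)]
        · simp [hw]
        · intro i _ hne
          have hni : (j:ℕ) ≠ (i:ℕ) := fun hji => hne (Fin.ext hji.symm)
          simp [hw, hni]
        · simp
      rw [hsum]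
      simp only [hb]
      rw [dif_pos h]
      ring
    · rw [dif_neg h]
      have hsum : (∑ i, w k j i * x i) = 0 := by
        apply Finset.sum_eq_zero
        intro i _
        have hni : (j:ℕ) ≠ (i:ℕ) := by
          have := i.isLt; omega
        simp [hw, hni]
      rw [hsum]
      simp only [hb]
      rw [dif_neg h]
      ring
  have hout : smmOut β w b x =
      lse (-β) (fun k : Fin K => lse β (fun j : Fin (d+1) =>
        if h : (j:ℕ) < d then f (p k) + (C:ℝ) * (x ⟨j,h⟩ - p k ⟨j,h⟩) else f (p k))) := by
    unfold smmOut
    congr 1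
    funext k
    congr 1
    funext j
    exact hA k j
  rw [hout]
  set A : Fin K → Fin (d+1) → ℝ := fun k j =>
    if h : (j:ℕ) < d then f (p k) + (C:ℝ) * (x ⟨j,h⟩ - p k ⟨j,h⟩) else f (p k) with hAdef
  -- grid point below x
  set mfun : Fin d → Fin (N+1) :=
    fun i => ⟨min (⌊x i * N⌋).toNat N, Nat.lt_succ_of_le (min_le_right _ _)⟩ with hmfun
  set k0 : Fin K := e mfun with hk0
  have hq : ∀ i, p k0 i = ((min (⌊x i * N⌋).toNat N : ℕ) : ℝ) / N := by
    intro i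
    simp [hp, hk0, hmfun]
  have hx0 : ∀ i, (0:ℝ) ≤ x i := fun i => hx.1 i
  have hx1 : ∀ i, x i ≤ 1 := fun i => hx.2 i
  have hfl : ∀ i, (0:ℤ) ≤ ⌊x i * N⌋ := fun i => Int.floor_nonneg.mpr (mul_nonneg (hx0 i) (by positivity))
  have hql : ∀ i, p k0 i ≤ x i := by
    intro i
    rw [hq i, div_le_iff₀ hNR]
    calc ((min (⌊x i * N⌋).toNat N : ℕ) : ℝ) ≤ ((⌊x i * N⌋).toNat : ℝ) := by
          exact_mod_cast min_le_left _ _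
      _ = ((⌊x i * N⌋ : ℤ) : ℝ) := by exact_mod_cast Int.toNat_of_nonneg (hfl i)
      _ ≤ x i * N := Int.floor_le _
  have hqu : ∀ i, x i - p k0 i ≤ 1 / N := by
    intro i
    have h1 : x i * N ≤ ((min (⌊x i * N⌋).toNat N : ℕ) : ℝ) + 1 := by
      have ha : x i * N ≤ ((⌊x i * N⌋).toNat : ℝ) + 1 := by
        have := Int.lt_floor_add_one (x i * N)
        have h2 : ((⌊x i * N⌋ : ℤ) : ℝ) ≤ ((⌊x i * N⌋).toNat : ℝ) := by
          exact_mod_cast Int.self_le_toNat _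
        linarith
      have hbn : x i * N ≤ (N : ℝ) + 1 := by nlinarith [hx1 i]
      have : ((min (⌊x i * N⌋).toNat N : ℕ) : ℝ) = min ((⌊x i * N⌋).toNat : ℝ) (N : ℝ) := by
        push_cast
        rfl
      rw [this, ← min_add_add_right]
      exact le_min ha hbn
    rw [hq i]
    rw [le_div_iff₀ hNR, sub_mul, div_mul_cancel₀ _ hNR.ne'] at *
    linarith
  have hfq : f (p k0) ≤ f x := hmono (hpIcc k0) hx (fun i => hql i)
  -- upper bound for all activation values at k0
  have hub : ∀ j : Fin (d+1), A k0 j ≤ f x + (C:ℝ) / N := by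
    intro j
    simp only [hAdef]
    by_cases h : (j:ℕ) < d
    · rw [dif_pos h]
      have h1 : x ⟨(j:ℕ),h⟩ - p k0 ⟨(j:ℕ),h⟩ ≤ 1/N := hqu _
      have h2 : (C:ℝ) * (x ⟨(j:ℕ),h⟩ - p k0 ⟨(j:ℕ),h⟩) ≤ (C:ℝ) * (1/N) :=
        mul_le_mul_of_nonneg_left h1 C.coe_nonneg
      have h3 : (C:ℝ) * (1/N) = (C:ℝ)/N := by ring
      linarith
    · rw [dif_neg h]
      have : (0:ℝ) ≤ (C:ℝ)/N := by positivity
      linarith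
  -- lower bound: for each k there is an activation value above f x
  have hlb : ∀ k : Fin K, f x ≤ lse β (A k) := by
    intro k
    by_cases hall : ∀ i, x i ≤ p k i
    · have hfx : f x ≤ f (p k) := hmono hx (hpIcc k) (fun i => hall i)
      refine le_trans ?_ (le_lse hβ (A k) (Fin.last d))
      have : A k (Fin.last d) = f (p k) := by
        simp only [hAdef]
        exact dif_neg (by simp)
      rw [this]; exact hfx
    · push_neg at hall
      obtain ⟨i₁, hi₁⟩ := hall
      have hne : (Finset.univ : Finset (Fin d)).Nonempty := ⟨i₁, Finset.mem_univ _⟩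
      obtain ⟨i₀, -, hi₀⟩ := Finset.exists_mem_eq_sup' hne (fun i => x i - p k i)
      set m : ℝ := x i₀ - p k i₀ with hm
      have hm_ge : ∀ i, x i - p k i ≤ m := by
        intro i
        have h1 : (fun i => x i - p k i) i ≤ Finset.univ.sup' hne (fun i => x i - p k i) :=
          Finset.le_sup' (fun i => x i - p k i) (Finset.mem_univ i)
        rw [hi₀] at h1
        exact h1
      have hmpos : 0 < m := lt_of_lt_of_le (by linarith) (hm_ge i₁)
      set z : Fin d → ℝ := x ⊔ p k with hz
      have hzi : ∀ i, z i = max (x i) (p k i) := fun i => rfl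
      have hzIcc : z ∈ Set.Icc (0 : Fin d → ℝ) 1 := by
        constructor
        · intro i; rw [hzi i]; exact le_max_of_le_left (hx0 i)
        · intro i; rw [hzi i]; exact max_le (hx1 i) ((hpIcc k).2 i)
      have hxz : f x ≤ f z := hmono hx hzIcc (fun i => by rw [hzi i]; exact le_max_left _ _)
      have hdist : dist z (p k) ≤ m := by
        rw [dist_pi_le_iff hmpos.le]
        intro i
        rw [Real.dist_eq, hzi i]
        rcases le_total (x i) (p k i) with h | h
        · rw [max_eq_right h]; simpa using hmpos.le
        · rw [max_eq_left h, abs_of_nonneg (by linarith)]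
          exact hm_ge i
      have hlipb : f z - f (p k) ≤ (C:ℝ) * m := by
        have h1 : dist (f z) (f (p k)) ≤ (C:ℝ) * dist z (p k) :=
          hC.dist_le_mul _ hzIcc _ (hpIcc k)
        have h2 : f z - f (p k) ≤ dist (f z) (f (p k)) := by
          rw [Real.dist_eq]; exact le_abs_self _
        have h3 : (C:ℝ) * dist z (p k) ≤ (C:ℝ) * m :=
          mul_le_mul_of_nonneg_left hdist C.coe_nonneg
        linarith
      have hjval : A k (Fin.castSucc i₀) = f (p k) + (C:ℝ) * m := by
        simp only [hAdef]
        have hlt : ((Fin.castSucc i₀ : Fin (d+1)) : ℕ) < d := by simp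
        rw [dif_pos hlt, hm]
        have heq : (⟨((Fin.castSucc i₀ : Fin (d+1)) : ℕ), hlt⟩ : Fin d) = i₀ := Fin.ext (by simp)
        rw [heq]
      calc f x ≤ f (p k) + (C:ℝ) * m := by linarith
        _ = A k (Fin.castSucc i₀) := hjval.symm
        _ ≤ lse β (A k) := le_lse hβ (A k) _
  -- combine
  have hupper : lse (-β) (fun k => lse β (A k)) ≤ f x + (C:ℝ)/N + Real.log ((d:ℕ)+1 : ℕ) / β := by
    calc lse (-β) (fun k => lse β (A k)) ≤ lse β (A k0) :=
          lse_neg_le hβ _ k0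
      _ ≤ (f x + (C:ℝ)/N) + Real.log ((d:ℕ)+1 : ℕ) / β :=
          lse_le hβ (Nat.succ_pos d) (A k0) _ hub
  have hlower : f x - Real.log K / β ≤ lse (-β) (fun k => lse β (A k)) :=
    le_lse_neg hβ hKpos _ (f x) hlb
  rw [abs_sub_lt_iff]
  constructor <;> [skip; skip] <;> 
    first
      | (have h1 := hlower; have h2 := hlogK; linarith)
      | (have h1 := hupper; have h2 := hlogd; linarith)
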